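/- Let Θ be a symmetric positive definite m×m matrix, ŷ ∈ ℝ^m, and 0 < η < m/λ_max(Θ). Define the gradient descent iteration on the linear model f_t = (I - (η/m)Θ)^t ŷ. Then the θ-space displacement after t steps, θ_t - θ₀ = (η/m) Jᵀ Σ_{k=0}^{t-1} (I - (η/m)Θ)^k ŷ where Θ = JJᵀ, satisfies ‖θ_t - θ₀‖₂ ≤ ‖θ_∞ - θ₀‖₂ = √(ŷᵀ Θ⁻¹ ŷ). -/

import Mathlib

open Matrix Filter

/-- The parameter displacement of gradient descent on the linearized model after `t` steps:
`θ_t - θ₀ = (η/m) Jᵀ Σ_{k<t} (I - (η/m)Θ)^k ŷ`. -/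
noncomputable def disp {m d : ℕ} (J : Matrix (Fin m) (Fin d) ℝ)
    (Θ : Matrix (Fin m) (Fin m) ℝ) (η : ℝ) (yhat : Fin m → ℝ) (t : ℕ) : Fin d → ℝ :=
  (η / m) • (Jᵀ *ᵥ ∑ k ∈ Finset.range t, ((1 - (η / m) • Θ) ^ k) *ᵥ yhat)

lemma sum_mulVec' {m : ℕ} {s : Finset ℕ} (A : ℕ → Matrix (Fin m) (Fin m) ℝ) (y : Fin m → ℝ) :
    (∑ k ∈ s, A k) *ᵥ y = ∑ k ∈ s, A k *ᵥ y := by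
  induction s using Finset.induction with
  | empty => simp
  | @insert a s h ih => rw [Finset.sum_insert h, Finset.sum_insert h, Matrix.add_mulVec, ih]

theorem stmt_8 {m d : ℕ} (J : Matrix (Fin m) (Fin d) ℝ)
    (Θ : Matrix (Fin m) (Fin m) ℝ) (hJ : Θ = J * Jᵀ)
    (hΘ : Θ.IsHermitian) (hpd : Θ.PosDef)
    (lammax : ℝ) (hmax : ∀ i, hΘ.eigenvalues i ≤ lammax)
    (η : ℝ) (hη0 : 0 < η) (hηm : η < m / lammax)
    (yhat : Fin m → ℝ) :
    (∀ t : ℕ, Real.sqrt (disp J Θ η yhat t ⬝ᵥ disp J Θ η yhat t) ≤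
        Real.sqrt (yhat ⬝ᵥ (Θ⁻¹ *ᵥ yhat))) ∧
      Tendsto (fun t : ℕ => Real.sqrt (disp J Θ η yhat t ⬝ᵥ disp J Θ η yhat t)) atTop
        (nhds (Real.sqrt (yhat ⬝ᵥ (Θ⁻¹ *ᵥ yhat)))) := by
  classical
  have hm0 : m ≠ 0 := by
    rintro rfl
    simp only [Nat.cast_zero, zero_div] at hηm
    linarith
  have hm : (0:ℝ) < m := by exact_mod_cast Nat.pos_of_ne_zero hm0
  set lam : Fin m → ℝ := hΘ.eigenvalues with hlamdef
  have hlam_pos : ∀ i, 0 < lam i := fun i => hpd.eigenvalues_pos i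
  have hlmax : 0 < lammax :=
    lt_of_lt_of_le (hlam_pos ⟨0, Nat.pos_of_ne_zero hm0⟩) (hmax _)
  set c : ℝ := η / m with hcdef
  have hc0 : 0 < c := div_pos hη0 hm
  have hcl1 : ∀ i, c * lam i < 1 := by
    intro i
    have h1 : η * lammax < m := (lt_div_iff₀ hlmax).mp hηm
    have h2 : c * lam i ≤ c * lammax :=
      mul_le_mul_of_nonneg_left (hmax i) hc0.le
    have h3 : c * lammax < 1 := by
      rw [hcdef, div_mul_eq_mul_div, div_lt_one hm]; exact h1
    linarith
  have hcl0 : ∀ i, 0 < c * lam i := fun i => mul_pos hc0 (hlam_pos i)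
  -- spectral setup
  set U : Matrix (Fin m) (Fin m) ℝ := (hΘ.eigenvectorUnitary : Matrix (Fin m) (Fin m) ℝ) with hUdef
  have hU2 : star U * U = 1 := Matrix.mem_unitaryGroup_iff'.mp hΘ.eigenvectorUnitary.2
  set D : (Fin m → ℝ) → Matrix (Fin m) (Fin m) ℝ :=
    fun f => U * Matrix.diagonal f * star U with hDdef
  have hDmul : ∀ f g, D f * D g = D (fun i => f i * g i) := by
    intro f g
    show U * Matrix.diagonal f * star U * (U * Matrix.diagonal g * star U) = _
    calc U * Matrix.diagonal f * star U * (U * Matrix.diagonal g * star U)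
        = U * Matrix.diagonal f * (star U * U) * (Matrix.diagonal g * star U) := by
          simp only [Matrix.mul_assoc]
      _ = U * (Matrix.diagonal f * Matrix.diagonal g) * star U := by
          rw [hU2]; simp only [Matrix.mul_assoc, Matrix.one_mul]
      _ = D (fun i => f i * g i) := by
          rw [Matrix.diagonal_mul_diagonal]
  have hDone : D (fun _ => 1) = 1 := by
    show U * Matrix.diagonal (fun _ => 1) * star U = 1
    rw [show (Matrix.diagonal (fun _ => (1:ℝ)) : Matrix (Fin m) (Fin m) ℝ) = 1 from
      Matrix.diagonal_one, Matrix.mul_one]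
    exact Matrix.mem_unitaryGroup_iff.mp hΘ.eigenvectorUnitary.2
  have hΘD : Θ = D lam := by
    have := hΘ.spectral_theorem
    simpa using this
  have hDsub : ∀ f g : Fin m → ℝ, D (fun i => f i - g i) = D f - D g := by
    intro f g
    show U * Matrix.diagonal (fun i => f i - g i) * star U = _
    have hd : Matrix.diagonal (fun i => f i - g i) = Matrix.diagonal f - Matrix.diagonal g := by
      rw [← Matrix.diagonal_sub]
    rw [hd, Matrix.mul_sub, Matrix.sub_mul]
  have hDadd : ∀ f g : Fin m → ℝ, D (fun i => f i + g i) = D f + D g := by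
    intro f g
    show U * Matrix.diagonal (fun i => f i + g i) * star U = _
    have hd : Matrix.diagonal (fun i => f i + g i) = Matrix.diagonal f + Matrix.diagonal g := by
      rw [← Matrix.diagonal_add]
    rw [hd, Matrix.mul_add, Matrix.add_mul]
  have hDzero : D (fun _ => 0) = 0 := by
    show U * Matrix.diagonal (fun _ => (0:ℝ)) * star U = 0
    have hd : Matrix.diagonal (fun _ : Fin m => (0:ℝ)) = 0 := by
      ext i j; simp [Matrix.diagonal]
    rw [hd, Matrix.mul_zero, Matrix.zero_mul]
  have hDsmul : ∀ (a : ℝ) f, a • D f = D (fun i => a * f i) := by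
    intro a f
    show a • (U * Matrix.diagonal f * star U) = U * Matrix.diagonal (fun i => a * f i) * star U
    rw [show (Matrix.diagonal fun i => a * f i) = a • Matrix.diagonal f by
      rw [← Matrix.diagonal_smul]; rfl]
    simp [Matrix.mul_smul, Matrix.smul_mul]
  set r : Fin m → ℝ := fun i => 1 - c * lam i with hrdef
  have hA : (1 : Matrix (Fin m) (Fin m) ℝ) - c • Θ = D r := by
    rw [hΘD, hDsmul, ← hDone, hrdef]
    exact (hDsub (fun _ => 1) (fun i => c * lam i)).symm
  have hDpow : ∀ (f : Fin m → ℝ) (k : ℕ), (D f) ^ k = D (fun i => f i ^ k) := by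
    intro f k
    induction k with
    | zero => simp [pow_zero, ← hDone]
    | succ n ih =>
        rw [pow_succ, ih, hDmul]
        simp [pow_succ]
  -- z coordinates
  set z : Fin m → ℝ := star U *ᵥ yhat with hzdef
  have heval : ∀ f : Fin m → ℝ, yhat ⬝ᵥ (D f *ᵥ yhat) = ∑ i, f i * (z i)^2 := by
    intro f
    show yhat ⬝ᵥ ((U * Matrix.diagonal f * star U) *ᵥ yhat) = _
    rw [← Matrix.mulVec_mulVec, ← Matrix.mulVec_mulVec, Matrix.dotProduct_mulVec]
    have hvm : yhat ᵥ* U = z := by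
      rw [hzdef, Matrix.star_eq_conjTranspose, Matrix.conjTranspose_eq_transpose_of_trivial,
        Matrix.mulVec_transpose]
    rw [hvm]
    simp only [dotProduct, Matrix.mulVec_diagonal, pow_two]
    exact Finset.sum_congr rfl fun i _ => by ring
  have hDsymm : ∀ f, (D f)ᵀ = D f := by
    intro f
    show (U * Matrix.diagonal f * star U)ᵀ = U * Matrix.diagonal f * star U
    rw [Matrix.star_eq_conjTranspose, Matrix.conjTranspose_eq_transpose_of_trivial]
    simp [Matrix.transpose_mul, Matrix.diagonal_transpose, Matrix.mul_assoc]
  have hDsum : ∀ (t : ℕ) (f : ℕ → Fin m → ℝ),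
      ∑ k ∈ Finset.range t, D (f k) = D (fun i => ∑ k ∈ Finset.range t, f k i) := by
    intro t f
    induction t with
    | zero => simp only [Finset.sum_range_zero]; exact hDzero.symm
    | succ n ih =>
        have he : (fun i => (∑ k ∈ Finset.range n, f k i) + f n i)
            = (fun i => ∑ k ∈ Finset.range (n + 1), f k i) :=
          funext fun i => (Finset.sum_range_succ _ _).symm
        rw [Finset.sum_range_succ, ih, ← hDadd, he]
  -- key identity for disp dot disp
  set s : ℕ → Fin m → ℝ := fun t i => ∑ k ∈ Finset.range t, (r i) ^ k with hsdef
  have hdd : ∀ t, disp J Θ η yhat t ⬝ᵥ disp J Θ η yhat t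
      = ∑ i, (c^2 * lam i * (s t i)^2) * (z i)^2 := by
    intro t
    have hsum : ∑ k ∈ Finset.range t, ((1 - c • Θ) ^ k) *ᵥ yhat = D (s t) *ᵥ yhat := by
      rw [← sum_mulVec']
      congr 1
      rw [hA]
      simp only [hDpow]
      rw [hDsum]
    unfold disp
    rw [← hcdef, hsum]
    set v : Fin m → ℝ := D (s t) *ᵥ yhat with hvdef
    rw [dotProduct_smul, smul_dotProduct, smul_smul, smul_eq_mul]
    have hw : (Jᵀ *ᵥ v) ⬝ᵥ (Jᵀ *ᵥ v) = yhat ⬝ᵥ (D (fun i => lam i * s t i * s t i) *ᵥ yhat) := by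
      rw [Matrix.dotProduct_mulVec (Jᵀ *ᵥ v) Jᵀ v, Matrix.vecMul_transpose,
        Matrix.mulVec_mulVec, ← hJ, hΘD]
      rw [hvdef, Matrix.mulVec_mulVec, hDmul]
      have hflip : D (fun i => lam i * s t i) *ᵥ yhat = yhat ᵥ* D (fun i => lam i * s t i) := by
        conv_lhs => rw [← hDsymm]
        rw [Matrix.mulVec_transpose]
      rw [hflip, ← Matrix.dotProduct_mulVec, Matrix.mulVec_mulVec, hDmul]
    rw [hw, heval, Finset.mul_sum]
    apply Finset.sum_congr rfl
    intro i _
    ring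
  -- inverse
  have hinv : Θ⁻¹ = D (fun i => (lam i)⁻¹) := by
    apply Matrix.inv_eq_right_inv
    rw [hΘD, hDmul]
    rw [show (fun i => lam i * (lam i)⁻¹) = fun _ => (1:ℝ) by
      funext i; exact mul_inv_cancel₀ (hlam_pos i).ne']
    exact hDone
  have htarget : yhat ⬝ᵥ (Θ⁻¹ *ᵥ yhat) = ∑ i, (lam i)⁻¹ * (z i)^2 := by
    rw [hinv, heval]
  -- scalar simplification
  have hr0 : ∀ i, 0 ≤ r i := fun i => by
    have h := hcl1 i; show (0:ℝ) ≤ 1 - c * lam i; linarith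
  have hr1 : ∀ i, r i < 1 := fun i => by
    have h := hcl0 i; show 1 - c * lam i < 1; linarith
  have hsimp : ∀ t i, c^2 * lam i * (s t i)^2 = (1 - (r i)^t)^2 / lam i := by
    intro t i
    have hne : r i ≠ 1 := (hr1 i).ne
    show c ^ 2 * lam i * (∑ k ∈ Finset.range t, r i ^ k) ^ 2 = _
    have h1 : r i - 1 = -(c * lam i) := by show 1 - c * lam i - 1 = _; ring
    rw [geom_sum_eq hne, h1, div_pow (r i ^ t - 1) (-(c * lam i)), neg_sq, mul_pow, ← mul_div_assoc,
      div_eq_div_iff (mul_pos (pow_pos hc0 2) (pow_pos (hlam_pos i) 2)).ne'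
        (hlam_pos i).ne']
    ring
  have hdd' : ∀ t, disp J Θ η yhat t ⬝ᵥ disp J Θ η yhat t
      = ∑ i, ((1 - (r i)^t)^2 / lam i) * (z i)^2 := by
    intro t
    rw [hdd t]
    exact Finset.sum_congr rfl fun i _ => by rw [hsimp]
  constructor
  · intro t
    rw [hdd' t, htarget]
    apply Real.sqrt_le_sqrt
    apply Finset.sum_le_sum
    intro i _
    have h1 : 0 ≤ (r i)^t := pow_nonneg (hr0 i) t
    have h2 : (r i)^t ≤ 1 := pow_le_one₀ (hr0 i) (hr1 i).le
    have h3 : (1 - (r i)^t)^2 ≤ 1 := by nlinarith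
    have h4 : (1 - (r i)^t)^2 / lam i ≤ (lam i)⁻¹ := by
      rw [div_le_iff₀ (hlam_pos i), inv_mul_cancel₀ (hlam_pos i).ne']
      exact h3
    exact mul_le_mul_of_nonneg_right h4 (sq_nonneg _)
  · have h1 : Tendsto (fun t : ℕ => disp J Θ η yhat t ⬝ᵥ disp J Θ η yhat t) atTop
        (nhds (yhat ⬝ᵥ (Θ⁻¹ *ᵥ yhat))) := by
      simp only [hdd', htarget]
      apply tendsto_finset_sum
      intro i _
      have hpow : Tendsto (fun t : ℕ => (r i)^t) atTop (nhds 0) :=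
        tendsto_pow_atTop_nhds_zero_of_lt_one (hr0 i) (hr1 i)
      have : Tendsto (fun t : ℕ => ((1 - (r i)^t)^2 / lam i) * (z i)^2) atTop
          (nhds (((1 - 0)^2 / lam i) * (z i)^2)) := by
        apply Tendsto.mul_const
        apply Tendsto.div_const
        apply Tendsto.pow
        exact tendsto_const_nhds.sub hpow
      simpa using this
    exact h1.sqrt
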